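/- For the cosine annealing schedule h(u) = (1+cos(πu))/2, define H(v) = ∫_v^1 h(u) du and I(v) = ∫_v^1 h(u)^2/H(u) du. Then (1/3)(1-v)^3 ≤ H(v) ≤ (5/6)(1-v)^3 and (3/5)(1-v)^2 ≤ I(v) ≤ (75/8)(1-v)^2 for all v ∈ [0,1]. -/

import Mathlib

open Real Set MeasureTheory

private lemma hc_cont : Continuous (fun u : ℝ => (1 + Real.cos (π * u)) / 2) := by
  continuity

private lemma h_eq (u : ℝ) :
    (1 + Real.cos (π * u)) / 2 = Real.sin (π * (1 - u) / 2) ^ 2 := by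
  have h1 : Real.cos (π * u / 2) ^ 2 = 1/2 + Real.cos (2 * (π * u / 2)) / 2 := Real.cos_sq _
  have h2 : Real.cos (π * u / 2) = Real.sin (π * (1 - u) / 2) := by
    rw [← Real.sin_pi_div_two_sub]; ring_nf
  rw [← h2, h1]; ring_nf

private lemma h_bnd {u : ℝ} (hu : u ∈ Icc (0:ℝ) 1) :
    (1 - u) ^ 2 ≤ (1 + Real.cos (π * u)) / 2 ∧
    (1 + Real.cos (π * u)) / 2 ≤ (5/2) * (1 - u) ^ 2 := by
  obtain ⟨hu0, hu1⟩ := hu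
  have hπ := Real.pi_pos
  have hx0 : (0:ℝ) ≤ π * (1 - u) / 2 := by nlinarith
  have hx1 : π * (1 - u) / 2 ≤ π / 2 := by nlinarith
  have hlb := Real.mul_le_sin hx0 hx1
  have hub := Real.sin_le hx0
  have hlb' : 1 - u ≤ Real.sin (π * (1 - u) / 2) := by
    have hπ' : π ≠ 0 := ne_of_gt hπ
    calc 1 - u = 2 / π * (π * (1 - u) / 2) := by field_simp
    _ ≤ _ := hlb
  have hs0 : 0 ≤ Real.sin (π * (1 - u) / 2) := le_trans (by linarith) hlb'
  have hπ2 : π < 3.15 := Real.pi_lt_d2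
  have hub2 : Real.sin (π * (1 - u) / 2) ^ 2 ≤ (π * (1 - u) / 2) ^ 2 := by nlinarith
  constructor
  · rw [h_eq]; nlinarith
  · have hπsq : π ^ 2 ≤ 10 := by nlinarith
    rw [h_eq]; nlinarith [sq_nonneg (1 - u), mul_nonneg (sub_nonneg.2 hπsq) (sq_nonneg (1 - u))]

private lemma int_sq (v : ℝ) : (∫ u in v..1, (1 - u) ^ 2) = (1 - v) ^ 3 / 3 := by
  have hd : ∀ u ∈ uIcc v 1, HasDerivAt (fun u : ℝ => -(1 - u) ^ 3 / 3) ((1 - u) ^ 2) u := by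
    intro u _
    have : HasDerivAt (fun u : ℝ => 1 - u) (-1) u := by
      simpa using (hasDerivAt_id u).const_sub 1
    have := ((this.pow 3).neg.div_const 3)
    exact this.congr_deriv (by ring)
  rw [intervalIntegral.integral_eq_sub_of_hasDerivAt hd
    (((continuous_const.sub continuous_id).pow 2 : Continuous fun u : ℝ => (1 - u) ^ 2).intervalIntegrable v 1)]
  ring

private lemma int_lin (v : ℝ) : (∫ u in v..1, (1 - u)) = (1 - v) ^ 2 / 2 := by
  have hd : ∀ u ∈ uIcc v 1, HasDerivAt (fun u : ℝ => -(1 - u) ^ 2 / 2) (1 - u) u := by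
    intro u _
    have : HasDerivAt (fun u : ℝ => 1 - u) (-1) u := by
      simpa using (hasDerivAt_id u).const_sub 1
    have := ((this.pow 2).neg.div_const 2)
    exact this.congr_deriv (by ring)
  rw [intervalIntegral.integral_eq_sub_of_hasDerivAt hd
    ((continuous_const.sub continuous_id : Continuous fun u : ℝ => (1 - u)).intervalIntegrable v 1)]
  ring

private lemma H_closed (v : ℝ) :
    (∫ u in v..1, (1 + Real.cos (π * u)) / 2) = (1 - v) / 2 - Real.sin (π * v) / (2 * π) := by
  have hπ := Real.pi_pos
  have hd : ∀ u ∈ uIcc v 1, HasDerivAt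
      (fun u : ℝ => u / 2 + Real.sin (π * u) / (2 * π)) ((1 + Real.cos (π * u)) / 2) u := by
    intro u _
    have h1 : HasDerivAt (fun u : ℝ => π * u) π u := by
      simpa using (hasDerivAt_id u).const_mul π
    have h2 := (((Real.hasDerivAt_sin (π * u)).comp u h1).div_const (2 * π))
    have h3 := (hasDerivAt_id u).div_const 2
    have := h3.add h2
    exact this.congr_deriv (by field_simp)
  rw [intervalIntegral.integral_eq_sub_of_hasDerivAt hd (hc_cont.intervalIntegrable v 1)]
  simp [Real.sin_pi]
  ring

set_option maxHeartbeats 2000000 in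
theorem stmt6 (h H I : ℝ → ℝ)
    (hh : ∀ u, h u = (1 + Real.cos (π * u)) / 2)
    (hH : ∀ v, H v = ∫ u in v..1, h u)
    (hI : ∀ v, I v = ∫ u in v..1, (h u) ^ 2 / H u) :
    ∀ v ∈ Icc (0:ℝ) 1,
      (1 / 3) * (1 - v) ^ 3 ≤ H v ∧ H v ≤ (5 / 6) * (1 - v) ^ 3 ∧
      (3 / 5) * (1 - v) ^ 2 ≤ I v ∧ I v ≤ (75 / 8) * (1 - v) ^ 2 := by
  have hHval : ∀ v : ℝ, H v = (1 - v) / 2 - Real.sin (π * v) / (2 * π) := by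
    intro v
    rw [hH v]
    simp only [hh]
    exact H_closed v
  -- H bounds for any v ∈ Icc 0 1
  have hHb : ∀ v ∈ Icc (0:ℝ) 1,
      (1/3) * (1 - v) ^ 3 ≤ H v ∧ H v ≤ (5/6) * (1 - v) ^ 3 := by
    intro v hv
    have hv1 : v ≤ 1 := hv.2
    have hhint : IntervalIntegrable (fun u => (1 + Real.cos (π * u)) / 2) volume v 1 :=
      hc_cont.intervalIntegrable v 1
    have hH' : H v = ∫ u in v..1, (1 + Real.cos (π * u)) / 2 := by
      rw [hH v]; simp only [hh]
    constructor
    · have hmono := intervalIntegral.integral_mono_on hv1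
        (((continuous_const.sub continuous_id).pow 2 : Continuous fun u : ℝ => (1 - u) ^ 2).intervalIntegrable v 1) hhint
        (fun u hu => (h_bnd ⟨le_trans hv.1 hu.1, hu.2⟩).1)
      simp only [Pi.pow_apply, Pi.sub_apply, Pi.mul_apply, id_eq] at hmono
      rw [int_sq] at hmono
      rw [hH']; linarith
    · have hmono := intervalIntegral.integral_mono_on hv1 hhint
        ((continuous_const.mul ((continuous_const.sub continuous_id).pow 2) : Continuous fun u : ℝ => (5/2 : ℝ) * (1 - u) ^ 2).intervalIntegrable v 1)
        (fun u hu => (h_bnd ⟨le_trans hv.1 hu.1, hu.2⟩).2)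
      simp only [Pi.pow_apply, Pi.sub_apply, Pi.mul_apply, id_eq] at hmono
      rw [intervalIntegral.integral_const_mul, int_sq] at hmono
      rw [hH']; linarith
  intro v hv
  have hv0 := hv.1
  have hv1 := hv.2
  have hfbnd : ∀ u ∈ Icc v 1,
      (6/5) * (1 - u) ≤ h u ^ 2 / H u ∧ h u ^ 2 / H u ≤ (75/4) * (1 - u) := by
    intro u hu
    have hu01 : u ∈ Icc (0:ℝ) 1 := ⟨le_trans hv0 hu.1, hu.2⟩
    rcases eq_or_lt_of_le hu.2 with h1 | h1
    · subst h1
      have : h 1 = 0 := by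
        rw [hh]; simp [Real.cos_pi]
      simp [this]
    · have hHpos : 0 < H u := by
        have := (hHb u hu01).1
        nlinarith [pow_pos (sub_pos.2 h1) 3]
      have hb := h_bnd hu01
      rw [← hh] at hb
      have hHl := (hHb u hu01).1
      have hHu := (hHb u hu01).2
      constructor
      · rw [le_div_iff₀ hHpos]
        nlinarith [sub_pos.2 h1, sq_nonneg (h u), hb.1, pow_pos (sub_pos.2 h1) 2]
      · rw [div_le_iff₀ hHpos]
        have hh0 : 0 ≤ h u := le_trans (sq_nonneg _) hb.1
        have hsq : h u ^ 2 ≤ (25/4) * (1 - u) ^ 4 := by nlinarith [hb.2, hh0]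
        nlinarith [hsq, hHl, sub_pos.2 h1, mul_le_mul_of_nonneg_left hHl
          (by nlinarith [hu.2] : (0:ℝ) ≤ (75/4) * (1 - u))]
  have hfnn : ∀ u ∈ Ioc v 1, 0 ≤ h u ^ 2 / H u := by
    intro u hu
    have hu01 : u ∈ Icc (0:ℝ) 1 := ⟨le_trans hv0 hu.1.le, hu.2⟩
    have : 0 ≤ H u := by nlinarith [(hHb u hu01).1, pow_nonneg (sub_nonneg.2 hu.2) 3]
    positivity
  have hfm : Measurable fun u => h u ^ 2 / H u := by
    have hhm : Measurable h := by
      have : h = fun u => (1 + Real.cos (π * u)) / 2 := funext hh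
      rw [this]; exact hc_cont.measurable
    have hHm : Measurable H := by
      have he : H = fun v => (1 - v) / 2 - Real.sin (π * v) / (2 * π) := funext hHval
      rw [he]
      exact (((continuous_const.sub continuous_id).div_const 2).sub
        ((Real.continuous_sin.comp (continuous_const.mul continuous_id)).div_const (2 * π))).measurable
    exact (hhm.pow_const 2).div hHm
  have hfint : IntervalIntegrable (fun u => h u ^ 2 / H u) volume v 1 := by
    rw [intervalIntegrable_iff_integrableOn_Ioc_of_le hv1]
    apply Integrable.mono' (integrable_const (75/4 : ℝ)) hfm.aestronglyMeasurable
    filter_upwards [ae_restrict_mem measurableSet_Ioc] with u hu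
    rw [Real.norm_eq_abs, abs_of_nonneg (hfnn u hu)]
    have := (hfbnd u ⟨hu.1.le, hu.2⟩).2
    nlinarith [hu.1, hv0]
  refine ⟨(hHb v hv).1, (hHb v hv).2, ?_, ?_⟩
  · -- lower bound
    have hlin : IntervalIntegrable (fun u => (6/5 : ℝ) * (1 - u)) volume v 1 :=
      (continuous_const.mul (continuous_const.sub continuous_id) : Continuous fun u : ℝ => (6/5 : ℝ) * (1 - u)).intervalIntegrable v 1
    have hmono := intervalIntegral.integral_mono_on hv1 hlin hfint
      (fun u hu => (hfbnd u hu).1)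
    rw [intervalIntegral.integral_const_mul, int_lin] at hmono
    rw [hI v]; linarith
  · -- upper bound
    have hlin : IntervalIntegrable (fun u => (75/4 : ℝ) * (1 - u)) volume v 1 :=
      (continuous_const.mul (continuous_const.sub continuous_id) : Continuous fun u : ℝ => (75/4 : ℝ) * (1 - u)).intervalIntegrable v 1
    have hmono := intervalIntegral.integral_mono_on hv1 hfint hlin
      (fun u hu => (hfbnd u hu).2)
    rw [intervalIntegral.integral_const_mul, int_lin] at hmono
    rw [hI v]; linarith
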